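/- arXiv:2107.13292 — 5 statements merged into one kernel-verified Lean document; each statement's English description precedes it below -/
import Mathlib

section
/- Let X be a CAT(0) cube complex, x, y vertices, and h a halfspace with x, y ∈ h* (the complementary halfspace). If every pencil of halfspaces k₁ < … < k_n separating x from y whose hyperplanes all cross the hyperplane ĥ has length n ≤ D, then the nearest-point projection of h to the interval I(x,y) has diameter at most D·d, where d is the dimension of X. -/
/-! Combinatorial model of a CAT(0) cube complex: the vertex set of its 1-skeleton,
a median graph, with halfspaces, hyperplane crossing, dimension, hyperbolicity. -/

variable {V : Type*}

/-- The interval `I(x,y)`: vertices on geodesics from `x` to `y`. -/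
def interval (G : SimpleGraph V) (x y : V) : Set V :=
  {z | G.dist x z + G.dist z y = G.dist x y}

/-- A set is convex if it contains every geodesic between any two of its points. -/
def GConvex (G : SimpleGraph V) (S : Set V) : Prop :=
  ∀ x ∈ S, ∀ y ∈ S, interval G x y ⊆ S

/-- A halfspace: a nonempty proper convex set with convex complement. -/
def IsHalfspace (G : SimpleGraph V) (h : Set V) : Prop :=
  h.Nonempty ∧ hᶜ.Nonempty ∧ GConvex G h ∧ GConvex G hᶜ

/-- Two halfspaces cross (their hyperplanes intersect) if all four quarter-spaces
are nonempty. -/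
def Crosses (h k : Set V) : Prop :=
  (h ∩ k).Nonempty ∧ (h ∩ kᶜ).Nonempty ∧ (hᶜ ∩ k).Nonempty ∧ (hᶜ ∩ kᶜ).Nonempty

/-- A median graph: connected, and every triple of vertices has a unique median. -/
def MedianGraph (G : SimpleGraph V) : Prop :=
  G.Connected ∧
    ∀ x y z : V, ∃! m, m ∈ interval G x y ∩ interval G y z ∩ interval G x z

/-- Dimension at most `d`: at most `d` pairwise crossing hyperplanes. -/
def DimLE (G : SimpleGraph V) (d : ℕ) : Prop :=
  ∀ S : Finset (Set V), (∀ h ∈ S, IsHalfspace G h) →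
    (S : Set (Set V)).Pairwise Crosses → S.card ≤ d

/-- `k` is a halfspace separating `x` from `y` (oriented towards `y`). -/
def Separates (G : SimpleGraph V) (x y : V) (k : Set V) : Prop :=
  IsHalfspace G k ∧ x ∉ k ∧ y ∈ k

/-- δ-hyperbolicity (four point condition) for the graph metric. -/
def Hyperbolic (G : SimpleGraph V) (δ : ℕ) : Prop :=
  ∀ x y z w : V,
    G.dist x y + G.dist z w ≤
      max (G.dist x z + G.dist y w) (G.dist x w + G.dist y z) + 2 * δ

/-- A grid of size `m`: two nested pencils of `m` hyperplanes, pairwise crossing. -/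
def GridExists (G : SimpleGraph V) (m : ℕ) : Prop :=
  ∃ h k : Fin m → Set V,
    (∀ i, IsHalfspace G (h i)) ∧ (∀ i, IsHalfspace G (k i)) ∧
    (∀ i j, i < j → h i ⊂ h j) ∧ (∀ i j, i < j → k i ⊂ k j) ∧
    ∀ i j, Crosses (h i) (k j)

/-- `h` is a `D`-peripheral halfspace of the pair `(x,y)`: both `x,y ∈ h*`, and every
nested pencil of halfspaces separating `x` from `y` whose hyperplanes all cross `ĥ`
has length at most `D`. -/
def PeripheralD (G : SimpleGraph V) (x y : V) (D : ℕ) (h : Set V) : Prop :=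
  IsHalfspace G h ∧ x ∈ hᶜ ∧ y ∈ hᶜ ∧
    ∀ n : ℕ, ∀ k : Fin n → Set V, (∀ i, Separates G x y (k i)) →
      (∀ i j, i < j → k i ⊂ k j) → (∀ i, Crosses (k i) h) → n ≤ D

/-- The cylinder `I_D(x,y)`: intersection of the complements of all `D`-peripheral
halfspaces of `(x,y)`. -/
def cylinderD (G : SimpleGraph V) (D : ℕ) (x y : V) : Set V :=
  ⋂ h ∈ {h : Set V | PeripheralD G x y D h}, hᶜ

/-- `π` is the gate (nearest-point) projection to the convex set `C`. -/
def IsGate (G : SimpleGraph V) (C : Set V) (π : V → V) : Prop :=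
  ∀ z : V, π z ∈ C ∧ ∀ w ∈ C, G.dist z w = G.dist z (π z) + G.dist (π z) w


namespace Stmt8Aux

variable {G : SimpleGraph V}

lemma mem_interval {x y z : V} :
    z ∈ interval G x y ↔ G.dist x z + G.dist z y = G.dist x y := Iff.rfl

def side (G : SimpleGraph V) (a b : V) : Set V := {z | G.dist z a < G.dist z b}

lemma mem_side {a b z : V} : z ∈ side G a b ↔ G.dist z a < G.dist z b := Iff.rfl

lemma side_not_both {a b z : V} (h1 : z ∈ side G a b) (h2 : z ∈ side G b a) : False := by
  rw [mem_side] at h1 h2; omega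

lemma adj_dist {u v : V} (h : G.Adj u v) : G.dist u v = 1 :=
  SimpleGraph.dist_eq_one_iff_adj.mpr h

section
variable (hmed : MedianGraph G)
include hmed

lemma tri (u v w : V) : G.dist u w ≤ G.dist u v + G.dist v w :=
  hmed.1.dist_triangle

lemma eq_of_dist_eq_zero {u v : V} (h : G.dist u v = 0) : u = v :=
  (hmed.1.dist_eq_zero_iff).mp h

lemma noTie {a b : V} (hab : G.Adj a b) (z : V) : G.dist z a ≠ G.dist z b := by
  intro he
  obtain ⟨m, ⟨⟨hm1, hm2⟩, hm3⟩, -⟩ := hmed.2 z a b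
  rw [mem_interval] at hm1 hm2 hm3
  rw [adj_dist hab] at hm2
  have h0 : G.dist a m = 0 ∨ G.dist m b = 0 := by omega
  rcases h0 with h0 | h0
  · have : a = m := eq_of_dist_eq_zero hmed h0
    subst this
    rw [adj_dist hab] at hm3
    omega
  · have : m = b := eq_of_dist_eq_zero hmed h0
    subst this
    rw [adj_dist hab.symm] at hm1
    omega

lemma side_total {a b : V} (hab : G.Adj a b) (z : V) :
    z ∈ side G a b ∨ z ∈ side G b a := by
  rw [mem_side, mem_side]
  have := noTie hmed hab z
  omega

lemma side_compl {a b : V} (hab : G.Adj a b) : (side G a b)ᶜ = side G b a := by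
  ext z
  simp only [Set.mem_compl_iff, mem_side]
  have := noTie hmed hab z
  omega

lemma sideA_eq {a b : V} (hab : G.Adj a b) {z : V} (hz : z ∈ side G a b) :
    G.dist z b = G.dist z a + 1 := by
  have h1 := tri hmed z a b
  rw [adj_dist hab] at h1
  rw [mem_side] at hz
  omega

lemma step {u v : V} (hne : G.dist u v ≠ 0) :
    ∃ t, G.Adj u t ∧ t ∈ interval G u v ∧ G.dist t v + 1 = G.dist u v := by
  obtain ⟨p, hp⟩ := SimpleGraph.exists_walk_of_dist_ne_zero hne
  have hlen : p.length ≠ 0 := by rw [hp]; exact hne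
  have hnil : ¬ p.Nil := by
    intro hn
    exact hlen (SimpleGraph.Walk.nil_iff_length_eq.mp hn)
  have hadj : G.Adj u (p.getVert 1) := p.adj_snd hnil
  have hd1 : G.dist u (p.getVert 1) = 1 := adj_dist hadj
  have htail : G.dist (p.getVert 1) v ≤ p.tail.length := SimpleGraph.dist_le _
  have hlt : p.tail.length + 1 = p.length := SimpleGraph.Walk.length_tail_add_one hnil
  have htri : G.dist u v ≤ G.dist u (p.getVert 1) + G.dist (p.getVert 1) v := tri hmed _ _ _
  refine ⟨p.getVert 1, hadj, ?_, ?_⟩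
  · rw [mem_interval]; omega
  · omega

lemma interval_trans1 {u w v t : V} (hv : v ∈ interval G u w) (ht : t ∈ interval G u v) :
    t ∈ interval G u w := by
  rw [mem_interval] at *
  have h1 := tri hmed t v w
  have h2 := tri hmed u t w
  omega

lemma interval_trans2 {u v z t : V} (h1 : t ∈ interval G u v) (h2 : z ∈ interval G t v) :
    z ∈ interval G u v := by
  rw [mem_interval] at *
  have h3 := tri hmed u t z
  have h4 := tri hmed u z v
  omega

/-- Distances across a crossing edge. -/
lemma cross_edge {a b : V} (hab : G.Adj a b) {u v : V} (hu : u ∈ side G a b)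
    (hv : v ∈ side G b a) (huv : G.Adj u v) :
    G.dist u a = G.dist v b ∧ G.dist u b = G.dist u a + 1 ∧ G.dist v a = G.dist v b + 1 := by
  have h1 := sideA_eq hmed hab hu
  have h2 := sideA_eq hmed hab.symm hv
  have h3 := tri hmed u v a
  have h4 := tri hmed v u b
  have h5 : G.dist u v = 1 := adj_dist huv
  have h6 : G.dist v u = 1 := adj_dist huv.symm
  have h7 := tri hmed u v b
  have h8 := tri hmed v u a
  omega

/-- Base median argument: a common neighbor of two distinct vertices of `side a b`
is itself in `side a b`. -/
lemma bm {a b : V} (hab : G.Adj a b) {u t v : V} (hut : u ≠ t)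
    (hu : u ∈ side G a b) (ht : t ∈ side G a b)
    (h1 : G.Adj v u) (h2 : G.Adj v t) : v ∈ side G a b := by
  rcases side_total hmed hab v with hv | hv
  · exact hv
  exfalso
  obtain ⟨e1, e2, e3⟩ := cross_edge hmed hab hu hv h1.symm
  obtain ⟨f1, f2, f3⟩ := cross_edge hmed hab ht hv h2.symm
  have hd_vu : G.dist v u = 1 := adj_dist h1
  have hd_vt : G.dist v t = 1 := adj_dist h2
  have hd_uv : G.dist u v = 1 := adj_dist h1.symm
  have hd_tv : G.dist t v = 1 := adj_dist h2.symm
  have hnadj : ¬ G.Adj u t := by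
    intro hadj
    exact noTie hmed hadj v (by rw [hd_vu, hd_vt])
  have hd_ut : G.dist u t = 2 := by
    have hle := tri hmed u v t
    have hne1 : G.dist u t ≠ 1 := fun hh => hnadj (SimpleGraph.dist_eq_one_iff_adj.mp hh)
    have hne0 : G.dist u t ≠ 0 := fun hh => hut (eq_of_dist_eq_zero hmed hh)
    omega
  -- v is the median of (u, t, b)
  obtain ⟨m0, -, hun⟩ := hmed.2 u t b
  have hv_med : v = m0 := by
    apply hun
    refine ⟨⟨?_, ?_⟩, ?_⟩ <;> rw [mem_interval] <;> omega
  -- the median r of (u, t, a) is also a median of (u, t, b)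
  obtain ⟨r, ⟨⟨hr1, hr2⟩, hr3⟩, -⟩ := hmed.2 u t a
  rw [mem_interval] at hr1 hr2 hr3
  have hrb1 := tri hmed r a b
  have hrb2 := tri hmed u r b
  have hrb3 := tri hmed t r b
  rw [adj_dist hab] at hrb1
  have hr_med : r = m0 := by
    apply hun
    refine ⟨⟨?_, ?_⟩, ?_⟩ <;> rw [mem_interval] <;> omega
  have hvr : v = r := by rw [hv_med, hr_med]
  subst hvr
  omega

/-- Quadrangle condition. -/
lemma qc {x y z k : V} (hxy : x ≠ y) (hxz : G.Adj x z) (hyz : G.Adj y z)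
    (hx : G.dist k x + 1 = G.dist k z) (hy : G.dist k y + 1 = G.dist k z) :
    ∃ p, G.Adj x p ∧ G.Adj y p ∧ G.dist k p + 1 = G.dist k x := by
  have hd_zx : G.dist z x = 1 := adj_dist hxz.symm
  have hd_zy : G.dist z y = 1 := adj_dist hyz.symm
  have hd_xz : G.dist x z = 1 := adj_dist hxz
  have hd_yz : G.dist y z = 1 := adj_dist hyz
  have hnadj : ¬ G.Adj x y := by
    intro hadj
    exact noTie hmed hadj z (by rw [hd_zx, hd_zy])
  have hd_xy : G.dist x y = 2 := by
    have hle := tri hmed x z y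
    have hne1 : G.dist x y ≠ 1 := fun hh => hnadj (SimpleGraph.dist_eq_one_iff_adj.mp hh)
    have hne0 : G.dist x y ≠ 0 := fun hh => hxy (eq_of_dist_eq_zero hmed hh)
    omega
  obtain ⟨m, ⟨⟨hm1, hm2⟩, hm3⟩, -⟩ := hmed.2 x y k
  rw [mem_interval] at hm1 hm2 hm3
  have hc1 : G.dist k x = G.dist x k := SimpleGraph.dist_comm
  have hc2 : G.dist k y = G.dist y k := SimpleGraph.dist_comm
  have hc3 : G.dist k m = G.dist m k := SimpleGraph.dist_comm
  have hc4 : G.dist x y = G.dist y x := SimpleGraph.dist_comm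
  have hmx : G.dist x m ≠ 0 := by
    intro h0
    have hxm : x = m := eq_of_dist_eq_zero hmed h0
    subst hxm
    rw [hd_xy] at hm1
    -- hm2 : dist y x?? hm2 : dist y m + dist m k = dist y k with m = x
    omega
  have hmy : G.dist m y ≠ 0 := by
    intro h0
    have hmy' : m = y := eq_of_dist_eq_zero hmed h0
    subst hmy'
    omega
  have hdx : G.dist x m = 1 := by omega
  have hdy : G.dist m y = 1 := by omega
  refine ⟨m, SimpleGraph.dist_eq_one_iff_adj.mp hdx, (SimpleGraph.dist_eq_one_iff_adj.mp hdy).symm, ?_⟩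
  omega


/-- QC transport step: move the crossing edge one step closer to `w`. -/
lemma qcstep {a b : V} (hab : G.Adj a b) {u v t w : V} {n : ℕ}
    (hu : u ∈ side G a b) (hv : v ∈ side G b a) (ht : t ∈ side G b a)
    (huv : G.Adj u v) (hvt : G.Adj v t)
    (htb : G.dist t b + 1 = G.dist v b)
    (htw : G.dist t w + 1 = n) (huw : G.dist u w = n + 1) :
    ∃ p, p ∈ side G a b ∧ G.Adj p t ∧ G.dist p w = n := by
  obtain ⟨e1, e2, e3⟩ := cross_edge hmed hab hu hv huv
  have ht' : G.dist t a = G.dist t b + 1 := sideA_eq hmed hab.symm ht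
  have hut : u ≠ t := by
    intro h; subst h; exact side_not_both hu ht
  have hcau : G.dist a u = G.dist u a := SimpleGraph.dist_comm
  have hcav : G.dist a v = G.dist v a := SimpleGraph.dist_comm
  have hcat : G.dist a t = G.dist t a := SimpleGraph.dist_comm
  have hx : G.dist a u + 1 = G.dist a v := by omega
  have hy : G.dist a t + 1 = G.dist a v := by omega
  obtain ⟨p, hup, htp, hpa⟩ := qc hmed hut huv hvt.symm hx hy
  have hcap : G.dist a p = G.dist p a := SimpleGraph.dist_comm
  have hpA : p ∈ side G a b := by
    rcases side_total hmed hab p with h | h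
    · exact h
    exfalso
    obtain ⟨g1, g2, g3⟩ := cross_edge hmed hab hu h hup
    omega
  refine ⟨p, hpA, htp.symm, ?_⟩
  have h1 := tri hmed p t w
  have h2 := tri hmed u w p
  have h2' := tri hmed u p w
  have hd_pt : G.dist p t = 1 := adj_dist htp.symm
  have hd_up : G.dist u p = 1 := adj_dist hup
  omega


/-- Main lemma: a geodesic that has just crossed the hyperplane `(a,b)` towards `b`
ends on the `b`-side. -/
lemma mainD {a b : V} (hab : G.Adj a b) :
    ∀ n : ℕ, ∀ u v w : V, u ∈ side G a b → v ∈ side G b a → G.Adj u v →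
      G.dist v w = n → G.dist u w = n + 1 → w ∈ side G b a := by
  intro n
  induction n using Nat.strong_induction_on with
  | _ n IH =>
  intro u v w hu hv huv hvw huw
  rcases Nat.eq_zero_or_pos n with hn | hn
  · subst hn
    have : v = w := eq_of_dist_eq_zero hmed hvw
    exact this ▸ hv
  obtain ⟨e1, e2, e3⟩ := cross_edge hmed hab hu hv huv
  by_cases hcB : G.dist w b = n + G.dist v b
  · -- Case B : v lies between w and b
    by_contra hwB
    have hwA : w ∈ side G a b := (side_total hmed hab w).resolve_right hwB
    have hwa : G.dist w b = G.dist w a + 1 := sideA_eq hmed hab hwA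
    obtain ⟨y2, ⟨⟨hy1, hy2⟩, hy3⟩, -⟩ := hmed.2 v a w
    rw [mem_interval] at hy1 hy2 hy3
    have hc1 : G.dist a y2 = G.dist y2 a := SimpleGraph.dist_comm
    have hc2 : G.dist a w = G.dist w a := SimpleGraph.dist_comm
    have hj : G.dist v y2 = 1 := by omega
    have hi : G.dist y2 a = G.dist v b := by omega
    have hl : G.dist y2 w + 1 = n := by omega
    have hadj_vy : G.Adj v y2 := SimpleGraph.dist_eq_one_iff_adj.mp hj
    rcases side_total hmed hab y2 with hyA | hyB
    · have hne : u ≠ y2 := by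
        intro h; subst h; omega
      have := bm hmed hab hne hu hyA huv.symm hadj_vy
      exact side_not_both this hv
    · have hty : G.dist y2 b + 1 = G.dist v b := by
        have := sideA_eq hmed hab.symm hyB
        omega
      obtain ⟨p, hpA, hpt, hpw⟩ := qcstep hmed hab hu hv hyB huv hadj_vy hty hl huw
      have hw' := IH (n - 1) (by omega) p y2 w hpA hyB hpt (by omega) (by omega)
      exact hwB hw'
  · -- Case A : take a neighbor of v towards both b and w
    obtain ⟨ym, ⟨⟨hm1, hm2⟩, hm3⟩, -⟩ := hmed.2 v b w
    have hvy_ne : G.dist v ym ≠ 0 := by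
      intro h0
      have hvym : v = ym := eq_of_dist_eq_zero hmed h0
      subst hvym
      rw [mem_interval] at hm2
      have hc1 : G.dist b v = G.dist v b := SimpleGraph.dist_comm
      have hc2 : G.dist b w = G.dist w b := SimpleGraph.dist_comm
      omega
    obtain ⟨t, hvt, htI, hty'⟩ := step hmed hvy_ne
    have htvb : t ∈ interval G v b := interval_trans1 hmed hm1 htI
    have htvw : t ∈ interval G v w := interval_trans1 hmed hm3 htI
    rw [mem_interval] at htvb htvw
    have hd1 : G.dist v t = 1 := adj_dist hvt
    have htb : G.dist t b + 1 = G.dist v b := by omega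
    have htw : G.dist t w + 1 = n := by omega
    rcases side_total hmed hab t with htA | htB
    · have hne : u ≠ t := by
        intro h; subst h; omega
      have := bm hmed hab hne hu htA huv.symm hvt
      exact absurd (side_not_both this hv) (fun h => h)
    · obtain ⟨p, hpA, hpt, hpw⟩ := qcstep hmed hab hu hv htB huv hvt htb htw huw
      exact IH (n - 1) (by omega) p t w hpA htB hpt (by omega) (by omega)


/-- First switch along a geodesic from the `a`-side to the `b`-side. -/
lemma fs {a b : V} (hab : G.Adj a b) :
    ∀ n : ℕ, ∀ u v : V, G.dist u v = n → u ∈ side G a b → v ∈ side G b a →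
    ∃ u₀ v₀, u₀ ∈ side G a b ∧ v₀ ∈ side G b a ∧ G.Adj u₀ v₀ ∧
      u₀ ∈ interval G u v ∧ G.dist u₀ v = G.dist v₀ v + 1 := by
  intro n
  induction n using Nat.strong_induction_on with
  | _ n IH =>
  intro u v hn hu hv
  have hne : G.dist u v ≠ 0 := by
    intro h
    have := eq_of_dist_eq_zero hmed h
    subst this
    exact side_not_both hu hv
  obtain ⟨t, hut, htI, htd⟩ := step hmed hne
  rcases side_total hmed hab t with htA | htB
  · obtain ⟨u₀, v₀, h1, h2, h3, h4, h5⟩ := IH (G.dist t v) (by omega) t v rfl htA hv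
    exact ⟨u₀, v₀, h1, h2, h3, interval_trans2 hmed htI h4, h5⟩
  · refine ⟨u, t, hu, htB, hut, ?_, by omega⟩
    rw [mem_interval]
    simp [SimpleGraph.dist_self]

/-- Halfspaces of a median graph are convex. -/
lemma side_convex {a b : V} (hab : G.Adj a b) : GConvex G (side G a b) := by
  intro u hu w hw v hv
  rcases side_total hmed hab v with hvA | hvB
  · exact hvA
  exfalso
  obtain ⟨u₀, v₀, h1, h2, h3, h4, h5⟩ := fs hmed hab (G.dist u v) u v rfl hu hvB
  rw [mem_interval] at hv h4
  have t1 := tri hmed u₀ v w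
  have t2 := tri hmed u u₀ w
  have t3 := tri hmed v₀ v w
  have t4 := tri hmed u₀ v₀ w
  have hd : G.dist u₀ v₀ = 1 := adj_dist h3
  have hw' := mainD hmed hab (G.dist v₀ w) u₀ v₀ w h1 h2 h3 rfl (by omega)
  exact side_not_both hw hw'

lemma side_halfspace {a b : V} (hab : G.Adj a b) : IsHalfspace G (side G a b) := by
  refine ⟨⟨a, ?_⟩, ⟨b, ?_⟩, side_convex hmed hab, ?_⟩
  · rw [mem_side, SimpleGraph.dist_self, adj_dist (G := G) hab]
    omega
  · rw [Set.mem_compl_iff, mem_side, SimpleGraph.dist_self, adj_dist (G := G) hab.symm]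
    omega
  · rw [side_compl hmed hab]
    exact side_convex hmed hab.symm


lemma walk_dist_le {u v : V} (p : G.Walk u v) : ∀ i, G.dist u (p.getVert i) ≤ i := by
  intro i
  induction i with
  | zero => simp [SimpleGraph.Walk.getVert_zero, SimpleGraph.dist_self]
  | succ i ih =>
    by_cases hi : i < p.length
    · have hadj := p.adj_getVert_succ hi
      have htri := tri hmed u (p.getVert i) (p.getVert (i + 1))
      have := adj_dist hadj
      omega
    · rw [p.getVert_of_length_le (by omega), ← p.getVert_of_length_le (le_of_not_gt hi)]
      omega

lemma geo_getVert {u v : V} (p : G.Walk u v) (hp : p.length = G.dist u v) {i : ℕ}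
    (hi : i ≤ p.length) :
    G.dist u (p.getVert i) = i ∧ G.dist (p.getVert i) v = p.length - i := by
  have h1 := walk_dist_le hmed p i
  have h2 := walk_dist_le hmed p.reverse (p.length - i)
  rw [p.getVert_reverse] at h2
  have hii : p.length - (p.length - i) = i := by omega
  rw [hii] at h2
  have h3 := tri hmed u (p.getVert i) v
  have h4 : G.dist (p.getVert i) v = G.dist v (p.getVert i) := SimpleGraph.dist_comm
  omega

lemma geo_between {u v : V} (p : G.Walk u v) (hp : p.length = G.dist u v) {i j : ℕ}
    (hij : i ≤ j) (hj : j ≤ p.length) :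
    G.dist (p.getVert i) (p.getVert j) = j - i := by
  have hupper : ∀ m, i + m ≤ p.length → G.dist (p.getVert i) (p.getVert (i + m)) ≤ m := by
    intro m
    induction m with
    | zero => simp [SimpleGraph.dist_self]
    | succ m ih =>
      intro hm
      have hlt : i + m < p.length := by omega
      have hadj := p.adj_getVert_succ hlt
      have htri := tri hmed (p.getVert i) (p.getVert (i + m)) (p.getVert (i + m + 1))
      have hone := adj_dist hadj
      have he : i + (m + 1) = (i + m) + 1 := rfl
      rw [he]
      have := ih (by omega)
      omega
  have h1 := hupper (j - i) (by omega)
  have he : i + (j - i) = j := by omega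
  rw [he] at h1
  have g1 := (geo_getVert hmed p hp (le_trans hij hj)).2
  have g2 := (geo_getVert hmed p hp hj).2
  have h2 := tri hmed (p.getVert i) (p.getVert j) v
  omega

end

section Mirsky

open Classical in
/-- Height of `k` in the poset `(S, ⊂)`. -/
noncomputable def hgt (S : Finset (Set V)) (k : Set V) : ℕ :=
  ((S.filter (fun k' => k' ⊂ k)).attach.sup (fun k' => hgt S k'.1)) + 1
termination_by (S.filter (fun k' => k' ⊂ k)).card
decreasing_by
  have hk' : k'.1 ∈ S.filter (fun x => x ⊂ k) := k'.2
  rw [Finset.mem_filter] at hk'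
  apply Finset.card_lt_card
  have hsub : (S.filter (fun x => x ⊂ k'.1)) ⊆ (S.filter (fun x => x ⊂ k)) := by
    intro x hx
    rw [Finset.mem_filter] at hx ⊢
    exact ⟨hx.1, hx.2.trans hk'.2⟩
  refine (Finset.ssubset_iff_of_subset hsub).mpr ⟨k'.1, ?_, ?_⟩
  · rw [Finset.mem_filter]; exact ⟨hk'.1, hk'.2⟩
  · intro hcon
    rw [Finset.mem_filter] at hcon
    exact (ssubset_irrefl _) hcon.2

open Classical in
lemma hgt_pos (S : Finset (Set V)) (k : Set V) : 1 ≤ hgt S k := by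
  rw [hgt]; omega

open Classical in
lemma hgt_lt {S : Finset (Set V)} {k k' : Set V} (h1 : k' ∈ S) (h2 : k' ⊂ k) :
    hgt S k' < hgt S k := by
  conv_rhs => rw [hgt]
  have hmem : k' ∈ S.filter (fun x => x ⊂ k) := by
    rw [Finset.mem_filter]; exact ⟨h1, h2⟩
  have hle : hgt S k' ≤ (S.filter (fun x => x ⊂ k)).attach.sup (fun x => hgt S x.1) :=
    Finset.le_sup (f := fun x => hgt S x.1) (Finset.mem_attach _ ⟨k', hmem⟩)
  omega

open Classical in
lemma hgt_chain {S : Finset (Set V)} : ∀ N : ℕ, ∀ k ∈ S, hgt S k = N →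
    ∃ c : Fin N → Set V, (∀ i, c i ∈ S) ∧ (∀ i j : Fin N, i < j → c i ⊂ c j) ∧
      (∀ i, c i = k ∨ c i ⊂ k) := by
  intro N
  induction N using Nat.strong_induction_on with
  | _ N IH =>
  intro k hk hN
  rw [hgt] at hN
  rcases Finset.eq_empty_or_nonempty (S.filter (fun k' => k' ⊂ k)) with hfe | hfne
  · rw [hfe] at hN
    simp only [Finset.attach_empty, Finset.sup_empty, Finset.bot_eq_empty] at hN
    have hN1 : N = 1 := by
      have : (⊥ : ℕ) = 0 := rfl
      omega
    subst hN1
    refine ⟨fun _ => k, fun _ => hk, ?_, fun _ => Or.inl rfl⟩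
    intro i j hij
    have hi := i.isLt
    have hj := j.isLt
    have := Fin.lt_def.mp hij
    omega
  · obtain ⟨k'a, -, hsup⟩ := Finset.exists_mem_eq_sup
      ((S.filter (fun k' => k' ⊂ k)).attach) (Finset.attach_nonempty_iff.mpr hfne)
      (fun x => hgt S x.1)
    obtain ⟨k', hk'mem⟩ := k'a
    rw [Finset.mem_filter] at hk'mem
    simp only at hsup
    have hNeq : N = hgt S k' + 1 := by omega
    obtain ⟨c', hc1, hc2, hc3⟩ := IH (hgt S k') (by omega) k' hk'mem.1 rfl
    subst hNeq
    refine ⟨fun i => if h : (i : ℕ) < hgt S k' then c' ⟨i, h⟩ else k, ?_, ?_, ?_⟩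
    · intro i
      by_cases h : (i : ℕ) < hgt S k'
      · simp only [dif_pos h]; exact hc1 _
      · simp only [dif_neg h]; exact hk
    · intro i j hij
      have hij' := Fin.lt_def.mp hij
      by_cases hjm : (j : ℕ) < hgt S k'
      · have him : (i : ℕ) < hgt S k' := by omega
        simp only [dif_pos him, dif_pos hjm]
        exact hc2 ⟨i, him⟩ ⟨j, hjm⟩ (Fin.mk_lt_mk.mpr hij')
      · have him : (i : ℕ) < hgt S k' := by
          have := j.isLt
          omega
        simp only [dif_pos him, dif_neg hjm]
        rcases hc3 ⟨i, him⟩ with h | h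
        · rw [h]; exact hk'mem.2
        · exact h.trans hk'mem.2
    · intro i
      by_cases h : (i : ℕ) < hgt S k'
      · simp only [dif_pos h]
        right
        rcases hc3 ⟨i, h⟩ with h' | h'
        · rw [h']; exact hk'mem.2
        · exact h'.trans hk'mem.2
      · simp only [dif_neg h]
        exact Or.inl trivial

open Classical in
lemma mirsky {S : Finset (Set V)} {D d : ℕ}
    (hchain : ∀ m : ℕ, ∀ c : Fin m → Set V, (∀ i, c i ∈ S) →
      (∀ i j : Fin m, i < j → c i ⊂ c j) → m ≤ D)
    (hanti : ∀ T : Finset (Set V), T ⊆ S →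
      (∀ s ∈ T, ∀ s' ∈ T, s ≠ s' → ¬ (s ⊆ s')) → T.card ≤ d) :
    S.card ≤ D * d := by
  have hle : ∀ k ∈ S, hgt S k ≤ D := by
    intro k hk
    obtain ⟨c, h1, h2, -⟩ := hgt_chain (hgt S k) k hk rfl
    exact hchain _ c h1 h2
  have hfib : ∀ i : ℕ, (S.filter (fun k => hgt S k = i + 1)).card ≤ d := by
    intro i
    apply hanti _ (Finset.filter_subset _ _)
    intro s hs s' hs' hne hss
    rw [Finset.mem_filter] at hs hs'
    have hlt : hgt S s < hgt S s' := hgt_lt hs.1 (ssubset_of_subset_of_ne hss hne)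
    omega
  have hsub : S ⊆ (Finset.range D).biUnion
      (fun i => S.filter (fun k => hgt S k = i + 1)) := by
    intro k hk
    rw [Finset.mem_biUnion]
    refine ⟨hgt S k - 1, Finset.mem_range.mpr ?_, Finset.mem_filter.mpr ⟨hk, ?_⟩⟩
    · have := hle k hk
      have := hgt_pos S k
      omega
    · have := hgt_pos S k
      omega
  calc S.card ≤ _ := Finset.card_le_card hsub
    _ ≤ ∑ i ∈ Finset.range D, (S.filter (fun k => hgt S k = i + 1)).card :=
        Finset.card_biUnion_le
    _ ≤ ∑ _i ∈ Finset.range D, d := Finset.sum_le_sum (fun i _ => hfib i)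
    _ = D * d := by simp [Finset.sum_const, Finset.card_range, smul_eq_mul]

end Mirsky

lemma halfspace_compl {A : Set V} (hA : IsHalfspace G A) : IsHalfspace G Aᶜ := by
  obtain ⟨h1, h2, h3, h4⟩ := hA
  refine ⟨h2, ?_, h4, ?_⟩
  · rw [compl_compl]; exact h1
  · rw [compl_compl]; exact h3

lemma crosses_compl {A B : Set V} (hA : Crosses A B) : Crosses Aᶜ B := by
  obtain ⟨h1, h2, h3, h4⟩ := hA
  refine ⟨h3, h4, ?_, ?_⟩
  · rw [compl_compl]; exact h1
  · rw [compl_compl]; exact h2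

end Stmt8Aux

open Stmt8Aux

/-- if every pencil of halfspaces separating `x` from `y` whose
hyperplanes all cross `ĥ` has length at most `D`, then the projection of `h` to the
interval `I(x,y)` has diameter at most `D * d`. -/
theorem stmt8 (G : SimpleGraph V) (d D : ℕ) (hmed : MedianGraph G) (hdim : DimLE G d)
    (x y : V) (h : Set V) (hh : IsHalfspace G h) (hx : x ∈ hᶜ) (hy : y ∈ hᶜ)
    (hpencil : ∀ n : ℕ, ∀ k : Fin n → Set V, (∀ i, Separates G x y (k i)) →
      (∀ i j, i < j → k i ⊂ k j) → (∀ i, Crosses (k i) h) → n ≤ D)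
    (π : V → V) (hπ : IsGate G (interval G x y) π) :
    ∀ u ∈ π '' h, ∀ v ∈ π '' h, G.dist u v ≤ D * d := by
  classical
  have hconn : G.Connected := hmed.1
  rintro u ⟨a₁, ha₁, rfl⟩ v ⟨b₁, hb₁, rfl⟩
  obtain ⟨hπaC, hgatea⟩ := hπ a₁
  obtain ⟨hπbC, hgateb⟩ := hπ b₁
  obtain ⟨p, hp⟩ := hconn.exists_walk_length_eq_dist (π a₁) (π b₁)
  rw [← hp]
  -- the family of halfspaces dual to the edges of the geodesic `p`
  have hadj : ∀ i : Fin p.length, G.Adj (p.getVert (i : ℕ)) (p.getVert ((i : ℕ) + 1)) :=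
    fun i => p.adj_getVert_succ i.isLt
  set k : Fin p.length → Set V :=
    fun i => side G (p.getVert ((i : ℕ) + 1)) (p.getVert (i : ℕ)) with hkdef
  have hkmem : ∀ (i : Fin p.length) (z : V),
      z ∈ k i ↔ G.dist z (p.getVert ((i : ℕ) + 1)) < G.dist z (p.getVert (i : ℕ)) :=
    fun i z => Iff.rfl
  have hhalf : ∀ i, IsHalfspace G (k i) := fun i => side_halfspace hmed (hadj i).symm
  have hkcompl : ∀ i, (k i)ᶜ = side G (p.getVert (i : ℕ)) (p.getVert ((i : ℕ) + 1)) :=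
    fun i => side_compl hmed (hadj i).symm
  have hPAnot : ∀ i, π a₁ ∉ k i := by
    intro i hmem
    rw [hkmem] at hmem
    have h1 := (geo_getVert hmed p hp (le_of_lt i.isLt)).1
    have h2 := (geo_getVert hmed p hp (i := (i : ℕ) + 1) i.isLt).1
    omega
  have hPBin : ∀ i, π b₁ ∈ k i := by
    intro i
    rw [hkmem]
    have h1 := (geo_getVert hmed p hp (le_of_lt i.isLt)).2
    have h2 := (geo_getVert hmed p hp (i := (i : ℕ) + 1) i.isLt).2
    have c1 : G.dist (π b₁) (p.getVert (i : ℕ)) = G.dist (p.getVert (i : ℕ)) (π b₁) :=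
      SimpleGraph.dist_comm
    have c2 : G.dist (π b₁) (p.getVert ((i : ℕ) + 1)) =
        G.dist (p.getVert ((i : ℕ) + 1)) (π b₁) := SimpleGraph.dist_comm
    have := i.isLt
    omega
  have hIhc : interval G x y ⊆ hᶜ := hh.2.2.2 x hx y hy
  have hPAh : π a₁ ∈ hᶜ := hIhc hπaC
  have hPBh : π b₁ ∈ hᶜ := hIhc hπbC
  have hPB_int : π b₁ ∈ interval G b₁ (π a₁) := by
    rw [mem_interval]
    exact (hgateb (π a₁) hπaC).symm
  have hPA_int : π a₁ ∈ interval G a₁ (π b₁) := by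
    rw [mem_interval]
    exact (hgatea (π b₁) hπbC).symm
  have hcross : ∀ i, Crosses (k i) h := by
    intro i
    refine ⟨?_, ⟨π b₁, hPBin i, hPBh⟩, ?_, ⟨π a₁, hPAnot i, hPAh⟩⟩
    · by_contra hemp
      rw [Set.not_nonempty_iff_eq_empty] at hemp
      have hsubc : h ⊆ (k i)ᶜ := by
        intro z hz hzc
        exact Set.eq_empty_iff_forall_notMem.mp hemp z ⟨hzc, hz⟩
      have hconv : GConvex G (k i)ᶜ := (hhalf i).2.2.2
      exact (hconv b₁ (hsubc hb₁) (π a₁) (hPAnot i) hPB_int) (hPBin i)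
    · by_contra hemp
      rw [Set.not_nonempty_iff_eq_empty] at hemp
      have hsub : h ⊆ k i := by
        intro z hz
        by_contra hzc
        exact Set.eq_empty_iff_forall_notMem.mp hemp z ⟨hzc, hz⟩
      have hconv : GConvex G (k i) := (hhalf i).2.2.1
      exact hPAnot i (hconv a₁ (hsub ha₁) (π b₁) (hPBin i) hPA_int)
  have hxy1 : ∀ i, x ∈ k i → y ∈ k i → False := by
    intro i hx' hy'
    exact hPAnot i ((hhalf i).2.2.1 x hx' y hy' hπaC)
  have hxy2 : ∀ i, x ∉ k i → y ∈ k i := by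
    intro i hx'
    by_contra hy'
    exact ((hhalf i).2.2.2 x hx' y hy' hπbC) (hPBin i)
  set K : Fin p.length → Set V := fun i => if x ∈ k i then (k i)ᶜ else k i with hKdef
  have hKsep : ∀ i, IsHalfspace G (K i) ∧ x ∉ K i ∧ y ∈ K i := by
    intro i
    rw [hKdef]
    by_cases hxi : x ∈ k i
    · simp only [if_pos hxi]
      have hy' : y ∉ k i := fun hy' => hxy1 i hxi hy'
      exact ⟨halfspace_compl (hhalf i), fun hc => hc hxi, hy'⟩
    · simp only [if_neg hxi]
      exact ⟨hhalf i, hxi, hxy2 i hxi⟩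
  have hKcross : ∀ i, Crosses (K i) h := by
    intro i
    rw [hKdef]
    by_cases hxi : x ∈ k i
    · simp only [if_pos hxi]; exact crosses_compl (hcross i)
    · simp only [if_neg hxi]; exact hcross i
  have hwit : ∀ i j : Fin p.length, (i : ℕ) < (j : ℕ) →
      p.getVert ((i : ℕ) + 1) ∈ k i ∧ p.getVert ((i : ℕ) + 1) ∉ k j := by
    intro i j hij
    constructor
    · rw [hkmem, SimpleGraph.dist_self]
      have h1 := adj_dist (hadj i)
      have hc : G.dist (p.getVert ((i : ℕ) + 1)) (p.getVert (i : ℕ)) =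
          G.dist (p.getVert (i : ℕ)) (p.getVert ((i : ℕ) + 1)) := SimpleGraph.dist_comm
      omega
    · rw [hkmem]
      have h1 := geo_between hmed p hp (i := (i : ℕ) + 1) (j := (j : ℕ) + 1)
        (by omega) j.isLt
      have h2 := geo_between hmed p hp (i := (i : ℕ) + 1) (j := (j : ℕ))
        (by omega) (le_of_lt j.isLt)
      omega
  have hKne : ∀ i j : Fin p.length, (i : ℕ) < (j : ℕ) → K i ≠ K j := by
    intro i j hij heq
    obtain ⟨hw1, hw2⟩ := hwit i j hij
    rw [hKdef] at heq
    by_cases hxi : x ∈ k i <;> by_cases hxj : x ∈ k j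
    · simp only [if_pos hxi, if_pos hxj] at heq
      have hkk : k i = k j := by rw [← compl_compl (k i), heq, compl_compl]
      exact hw2 (hkk ▸ hw1)
    · simp only [if_pos hxi, if_neg hxj] at heq
      have : π a₁ ∈ (k i)ᶜ := hPAnot i
      rw [heq] at this
      exact hPAnot j this
    · simp only [if_neg hxi, if_pos hxj] at heq
      have : π b₁ ∈ (k j)ᶜ := heq ▸ hPBin i
      exact this (hPBin j)
    · simp only [if_neg hxi, if_neg hxj] at heq
      exact hw2 (heq ▸ hw1)
  have hKinj : Function.Injective K := by
    intro i j hije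
    by_contra hne
    have hne' : (i : ℕ) ≠ (j : ℕ) := fun hc => hne (Fin.ext hc)
    rcases Nat.lt_or_ge (i : ℕ) (j : ℕ) with hij | hij
    · exact hKne i j hij hije
    · exact hKne j i (by omega) hije.symm
  set S : Finset (Set V) := Finset.image K Finset.univ with hS
  have hcard : S.card = p.length := by
    rw [hS, Finset.card_image_of_injective _ hKinj, Finset.card_univ, Fintype.card_fin]
  have hmemS : ∀ s ∈ S, ∃ i, K i = s := by
    intro s hs
    rw [hS, Finset.mem_image] at hs
    obtain ⟨i, -, hi⟩ := hs
    exact ⟨i, hi⟩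
  have hchain : ∀ m : ℕ, ∀ c : Fin m → Set V, (∀ i, c i ∈ S) →
      (∀ i j : Fin m, i < j → c i ⊂ c j) → m ≤ D := by
    intro m c hcS hmono
    refine hpencil m c ?_ (fun i j hij => hmono i j hij) ?_
    · intro i
      obtain ⟨i', hi'⟩ := hmemS _ (hcS i)
      obtain ⟨hh1, hh2, hh3⟩ := hKsep i'
      exact ⟨hi' ▸ hh1, hi' ▸ hh2, hi' ▸ hh3⟩
    · intro i
      obtain ⟨i', hi'⟩ := hmemS _ (hcS i)
      exact hi' ▸ hKcross i'
  have hanti : ∀ T : Finset (Set V), T ⊆ S →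
      (∀ s ∈ T, ∀ s' ∈ T, s ≠ s' → ¬ (s ⊆ s')) → T.card ≤ d := by
    intro T hTS hT
    refine hdim T ?_ ?_
    · intro s hs
      obtain ⟨i', hi'⟩ := hmemS _ (hTS hs)
      exact hi' ▸ (hKsep i').1
    · intro s hs s' hs' hne
      rw [Finset.mem_coe] at hs hs'
      obtain ⟨i', hi'⟩ := hmemS _ (hTS hs)
      obtain ⟨j', hj'⟩ := hmemS _ (hTS hs')
      obtain ⟨-, hxs, hys⟩ := hKsep i'
      obtain ⟨-, hxs', hys'⟩ := hKsep j'
      rw [hi'] at hxs hys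
      rw [hj'] at hxs' hys'
      obtain ⟨z1, hz1, hz1'⟩ := Set.not_subset.mp (hT s hs s' hs' hne)
      obtain ⟨z2, hz2, hz2'⟩ := Set.not_subset.mp (hT s' hs' s hs hne.symm)
      exact ⟨⟨y, hys, hys'⟩, ⟨z1, hz1, hz1'⟩, ⟨z2, hz2', hz2⟩, ⟨x, hxs, hxs'⟩⟩
  have hfinal := mirsky hchain hanti
  rw [hcard] at hfinal
  exact hfinal
end

section
/- Let X be a δ-hyperbolic CAT(0) cube complex of dimension d, and let D = D(δ) be the maximal size of a grid in X (which exists and satisfies D ≤ 2δ). Define I_D(x,y) as the intersection of all h* over D-peripheral halfspaces h of (x,y). Then I(x,y) ⊆ I_D(x,y) ⊆ N_θ(I(x,y)) with θ = D·d. -/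
/-! Combinatorial model of a CAT(0) cube complex: the vertex set of its 1-skeleton,
a median graph, with halfspaces, hyperplane crossing, dimension, hyperbolicity. -/

variable {V : Type*}

namespace Stmt10Aux

variable {G : SimpleGraph V}

lemma mem_interval {x y z : V} :
    z ∈ interval G x y ↔ G.dist x z + G.dist z y = G.dist x y := Iff.rfl

lemma interval_comm {x y z : V} (h : z ∈ interval G x y) : z ∈ interval G y x := by
  rw [mem_interval] at h ⊢
  have c1 : G.dist y z = G.dist z y := SimpleGraph.dist_comm
  have c2 : G.dist z x = G.dist x z := SimpleGraph.dist_comm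
  have c3 : G.dist y x = G.dist x y := SimpleGraph.dist_comm
  omega

lemma interval_subset (hc : G.Connected) {x y z : V} (hz : z ∈ interval G x y) :
    interval G x z ⊆ interval G x y := by
  intro u hu
  rw [mem_interval] at hz hu ⊢
  have t1 : G.dist u y ≤ G.dist u z + G.dist z y := hc.dist_triangle
  have t2 : G.dist x y ≤ G.dist x u + G.dist u y := hc.dist_triangle
  omega

lemma dichotomy (hmed : MedianGraph G) {a b : V} (hab : G.dist a b = 1) (v : V) :
    G.dist v b = G.dist v a + 1 ∨ G.dist v a = G.dist v b + 1 := by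
  obtain ⟨m, ⟨⟨h1, h2⟩, h3⟩, -⟩ := hmed.2 v a b
  rw [mem_interval] at h1 h2 h3
  have hba : G.dist b a = 1 := by rw [G.dist_comm]; exact hab
  rw [hab] at h2
  rcases Nat.eq_zero_or_pos (G.dist a m) with h0 | hpos
  · have hma : m = a := ((hmed.1.dist_eq_zero_iff).mp h0).symm
    subst hma
    left; rw [hab] at h3; omega
  · have h0 : G.dist m b = 0 := by omega
    have hmb : m = b := (hmed.1.dist_eq_zero_iff).mp h0
    subst hmb
    right; rw [hba] at h1; omega

/-- Convexity of halfspaces `W(a,b)` determined by a pair at distance one. -/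
lemma side_convex (hmed : MedianGraph G) {a b : V} (hab : G.dist a b = 1) :
    ∀ u v w : V, G.dist u b = G.dist u a + 1 → G.dist v b = G.dist v a + 1 →
      w ∈ interval G u v → G.dist w b = G.dist w a + 1 := by
  have hc := hmed.1
  have hba : G.dist b a = 1 := by rw [G.dist_comm]; exact hab
  suffices H : ∀ N M u v w, G.dist w b = N → G.dist u v = M →
      G.dist u b = G.dist u a + 1 → G.dist v b = G.dist v a + 1 →
      w ∈ interval G u v → G.dist w b = G.dist w a + 1 by
    exact fun u v w h1 h2 h3 => H _ _ u v w rfl rfl h1 h2 h3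
  intro N
  induction N using Nat.strongRecOn with
  | ind N ih1 =>
  intro M
  induction M using Nat.strongRecOn with
  | ind M ih2 =>
  intro u v w hN hM h1 h2 h3
  rcases dichotomy hmed hab w with hgoal | hw
  · exact hgoal
  exfalso
  rw [mem_interval] at h3
  -- step 2 : median (u,w,b) must be w
  have step2 : G.dist u w + G.dist w b = G.dist u b := by
    obtain ⟨xx, ⟨⟨hx1, hx2⟩, hx3⟩, -⟩ := hmed.2 u w b
    have hx2' := hx2; rw [mem_interval] at hx2' hx3
    have t2 : G.dist xx a ≤ G.dist xx b + 1 := by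
      have := hc.dist_triangle (u := xx) (v := b) (w := a); omega
    have t1 : G.dist w a ≤ G.dist w xx + G.dist xx a := hc.dist_triangle
    have hxa : G.dist xx a = G.dist xx b + 1 := by omega
    by_cases hxw : xx = w
    · subst hxw; exact hx3
    · exfalso
      have hpos : 0 < G.dist w xx := hc.pos_dist_of_ne (fun h => hxw h.symm)
      have hxuv : xx ∈ interval G u v := interval_subset hc h3 hx1
      have := ih1 (G.dist xx b) (by omega) (G.dist u v) u v xx rfl rfl h1 h2 hxuv
      omega
  -- step 2' : median (v,w,b) must be w
  have step2' : G.dist v w + G.dist w b = G.dist v b := by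
    obtain ⟨xx, ⟨⟨hx1, hx2⟩, hx3⟩, -⟩ := hmed.2 v w b
    have hx2' := hx2; rw [mem_interval] at hx2' hx3
    have t2 : G.dist xx a ≤ G.dist xx b + 1 := by
      have := hc.dist_triangle (u := xx) (v := b) (w := a); omega
    have t1 : G.dist w a ≤ G.dist w xx + G.dist xx a := hc.dist_triangle
    have hxa : G.dist xx a = G.dist xx b + 1 := by omega
    by_cases hxw : xx = w
    · subst hxw; exact hx3
    · exfalso
      have hpos : 0 < G.dist w xx := hc.pos_dist_of_ne (fun h => hxw h.symm)
      have hxuv : xx ∈ interval G u v := by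
        have h3' : w ∈ interval G v u := interval_comm h3
        exact interval_comm (interval_subset hc h3' hx1)
      have := ih1 (G.dist xx b) (by omega) (G.dist u v) u v xx rfl rfl h1 h2 hxuv
      omega
  -- step 4 : median (u,w,a) must be u
  have step4 : G.dist w u + G.dist u a = G.dist w a := by
    obtain ⟨p, ⟨⟨hp1, hp2⟩, hp3⟩, -⟩ := hmed.2 u w a
    have hp1' := hp1; rw [mem_interval] at hp1' hp2 hp3
    have hpab : G.dist p b = G.dist p a + 1 := by
      rcases dichotomy hmed hab p with h | h
      · exact h
      · exfalso
        have t1 : G.dist u b ≤ G.dist u p + G.dist p b := hc.dist_triangle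
        omega
    by_cases hpu : p = u
    · subst hpu; exact hp2
    · exfalso
      have hpos : 0 < G.dist u p := hc.pos_dist_of_ne (fun h => hpu h.symm)
      have t1 : G.dist p v ≤ G.dist p w + G.dist w v := hc.dist_triangle
      have t2 : G.dist u v ≤ G.dist u p + G.dist p v := hc.dist_triangle
      have c1 : G.dist u p = G.dist p u := SimpleGraph.dist_comm
      have c2 : G.dist p w = G.dist w p := SimpleGraph.dist_comm
      have hwpv : w ∈ interval G p v := by rw [mem_interval]; omega
      have := ih2 (G.dist p v) (by omega) p v w hN rfl hpab h2 hwpv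
      omega
  -- step 4' : median (v,w,a) must be v
  have step4' : G.dist w v + G.dist v a = G.dist w a := by
    obtain ⟨p, ⟨⟨hp1, hp2⟩, hp3⟩, -⟩ := hmed.2 v w a
    have hp1' := hp1; rw [mem_interval] at hp1' hp2 hp3
    have hpab : G.dist p b = G.dist p a + 1 := by
      rcases dichotomy hmed hab p with h | h
      · exact h
      · exfalso
        have t1 : G.dist v b ≤ G.dist v p + G.dist p b := hc.dist_triangle
        omega
    by_cases hpv : p = v
    · subst hpv; exact hp2
    · exfalso
      have hpos : 0 < G.dist v p := hc.pos_dist_of_ne (fun h => hpv h.symm)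
      have t1 : G.dist u p ≤ G.dist u w + G.dist w p := hc.dist_triangle
      have t2 : G.dist u v ≤ G.dist u p + G.dist p v := hc.dist_triangle
      have hwc : G.dist w p = G.dist p w := SimpleGraph.dist_comm
      have hvc : G.dist p v = G.dist v p := SimpleGraph.dist_comm
      have hwv : G.dist w v = G.dist v w := SimpleGraph.dist_comm
      have hwpv : w ∈ interval G u p := by rw [mem_interval]; omega
      have := ih2 (G.dist u p) (by omega) u p w hN rfl h1 hpab hwpv
      omega
  -- arithmetic : d u w = d w v = 1, etc.
  have cuw : G.dist w u = G.dist u w := SimpleGraph.dist_comm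
  have cvw : G.dist w v = G.dist v w := SimpleGraph.dist_comm
  have huw1 : G.dist u w = 1 := by omega
  have hvw1 : G.dist v w = 1 := by omega
  set n := G.dist w b with hn
  have hua : G.dist u a = n := by omega
  have hva : G.dist v a = n := by omega
  have hduv : G.dist u v = 2 := by omega
  have hnpos : 0 < n := by
    rcases Nat.eq_zero_or_pos n with h0 | h
    · exfalso
      have hu0 : u = a := (hmed.1.dist_eq_zero_iff).mp (by omega)
      have hv0 : v = a := (hmed.1.dist_eq_zero_iff).mp (by omega)
      rw [hu0, hv0] at hduv
      rw [G.dist_self] at hduv; omega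
    · exact h
  -- the median mm of (u,v,a)
  obtain ⟨mm, ⟨⟨hm1, hm2⟩, hm3⟩, -⟩ := hmed.2 u v a
  have hm1' := hm1; rw [mem_interval] at hm1' hm2 hm3
  have cmv : G.dist mm v = G.dist v mm := SimpleGraph.dist_comm
  have hmu : mm ≠ u := by
    intro h; subst h
    omega
  have hmv : mm ≠ v := by
    intro h; subst h; omega
  have hum1 : G.dist u mm = 1 := by
    have p1 : 0 < G.dist u mm := hc.pos_dist_of_ne (fun h => hmu h.symm)
    have p2 : 0 < G.dist mm v := hc.pos_dist_of_ne hmv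
    omega
  have hmma : G.dist mm a + 1 = n := by omega
  have hmmb : G.dist mm b = n := by
    have t1 : G.dist mm b ≤ G.dist mm a + 1 := by
      have := hc.dist_triangle (u := mm) (v := a) (w := b); omega
    have t2 : G.dist u b ≤ G.dist u mm + G.dist mm b := hc.dist_triangle
    omega
  -- two medians of (u,v,b)
  obtain ⟨z, -, huniq⟩ := hmed.2 u v b
  have e1 : w = z := by
    apply huniq
    refine ⟨⟨?_, ?_⟩, ?_⟩ <;> rw [mem_interval] <;> omega
  have e2 : mm = z := by
    apply huniq
    refine ⟨⟨?_, ?_⟩, ?_⟩ <;> rw [mem_interval] <;> omega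
  have : w = mm := by rw [e1, e2]
  subst this
  omega


lemma W_halfspace (hmed : MedianGraph G) {a b : V} (hab : G.dist a b = 1) :
    IsHalfspace G {v | G.dist v b = G.dist v a + 1} := by
  have hba : G.dist b a = 1 := by rw [SimpleGraph.dist_comm]; exact hab
  refine ⟨⟨a, ?_⟩, ⟨b, ?_⟩, ?_, ?_⟩
  · show G.dist a b = G.dist a a + 1
    rw [SimpleGraph.dist_self]; omega
  · show ¬ (G.dist b b = G.dist b a + 1)
    rw [SimpleGraph.dist_self]; omega
  · intro u hu v hv z hz
    exact side_convex hmed hab u v z hu hv hz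
  · intro u hu v hv z hz
    have hu' : G.dist u a = G.dist u b + 1 := by
      rcases dichotomy hmed hab u with h | h
      · exact absurd h hu
      · exact h
    have hv' : G.dist v a = G.dist v b + 1 := by
      rcases dichotomy hmed hab v with h | h
      · exact absurd h hv
      · exact h
    have hz' : G.dist z a = G.dist z b + 1 := side_convex hmed hba u v z hu' hv' hz
    intro hzmem
    have : G.dist z b = G.dist z a + 1 := hzmem
    omega

lemma geodesic_family (hmed : MedianGraph G) (x y w m : V)
    (hmx : m ∈ interval G w x) (hmy : m ∈ interval G w y) :
    ∃ H : Fin (G.dist w m) → Set V, Function.Injective H ∧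
      (∀ i, IsHalfspace G (H i)) ∧ (∀ i, w ∈ H i) ∧ (∀ i, x ∉ H i) ∧ (∀ i, y ∉ H i) := by
  have hc := hmed.1
  set n := G.dist w m with hn
  obtain ⟨p, hp⟩ := (hc.preconnected w m).exists_walk_length_eq_dist
  set v_ : ℕ → V := p.getVert with hv
  have hv0 : v_ 0 = w := p.getVert_zero
  have hvn : v_ n = m := by rw [hn, ← hp]; exact p.getVert_length
  have f5 : ∀ i, i + 1 ≤ n → G.dist (v_ i) (v_ (i+1)) = 1 := by
    intro i hi
    exact SimpleGraph.dist_eq_one_iff_adj.mpr (p.adj_getVert_succ (by omega))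
  have f1 : ∀ i, i ≤ n → G.dist w (v_ i) ≤ i := by
    intro i
    induction i with
    | zero => intro _; rw [hv0, SimpleGraph.dist_self]
    | succ i ih =>
      intro hi
      have t : G.dist w (v_ (i+1)) ≤ G.dist w (v_ i) + G.dist (v_ i) (v_ (i+1)) :=
        hc.dist_triangle
      have h5 := f5 i hi
      have := ih (by omega)
      omega
  have f2 : ∀ k i, i + k = n → G.dist (v_ i) m ≤ k := by
    intro k
    induction k with
    | zero =>
      intro i hi
      have hvi : v_ i = m := by
        have hin : i = n := by omega
        rw [hin, hvn]
      rw [hvi, SimpleGraph.dist_self]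
    | succ k ih =>
      intro i hi
      have t : G.dist (v_ i) m ≤ G.dist (v_ i) (v_ (i+1)) + G.dist (v_ (i+1)) m :=
        hc.dist_triangle
      have h5 := f5 i (by omega)
      have := ih (i+1) (by omega)
      omega
  have f3 : ∀ i, i ≤ n → G.dist w (v_ i) = i ∧ G.dist (v_ i) m + i = n := by
    intro i hi
    have t : n ≤ G.dist w (v_ i) + G.dist (v_ i) m := by
      rw [hn]; exact hc.dist_triangle
    have h1 := f1 i hi
    have h2 := f2 (n - i) i (by omega)
    omega
  have f7 : ∀ s t, s ≤ t → t ≤ n → G.dist (v_ s) (v_ t) + s = t := by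
    intro s t hst htn
    have hle : ∀ t', s ≤ t' → t' ≤ n → G.dist (v_ s) (v_ t') ≤ t' - s := by
      intro t'
      induction t' with
      | zero =>
        intro h1 _
        have hs0 : s = 0 := by omega
        rw [hs0, SimpleGraph.dist_self]
      | succ t' ih =>
        intro h1 h2
        by_cases hst' : s = t' + 1
        · rw [hst', SimpleGraph.dist_self]
          omega
        · have tri : G.dist (v_ s) (v_ (t'+1)) ≤ G.dist (v_ s) (v_ t') + G.dist (v_ t') (v_ (t'+1)) :=
            hc.dist_triangle
          have := ih (by omega) (by omega)
          have h5 := f5 t' (by omega)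
          omega
    have h1 := hle t hst htn
    have h2 := (f3 s (by omega)).1
    have h3 := (f3 s (by omega)).2
    have h4 := (f3 t htn).2
    have tri1 : G.dist w m ≤ G.dist w (v_ s) + G.dist (v_ s) m := hc.dist_triangle
    have tri2 : G.dist (v_ s) m ≤ G.dist (v_ s) (v_ t) + G.dist (v_ t) m := hc.dist_triangle
    omega
  rw [mem_interval] at hmx hmy
  have gx : ∀ i, i ≤ n → G.dist (v_ i) x + i = G.dist w x := by
    intro i hi
    have t1 : G.dist (v_ i) x ≤ G.dist (v_ i) m + G.dist m x := hc.dist_triangle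
    have t2 : G.dist w x ≤ G.dist w (v_ i) + G.dist (v_ i) x := hc.dist_triangle
    have h3 := f3 i hi
    omega
  have gy : ∀ i, i ≤ n → G.dist (v_ i) y + i = G.dist w y := by
    intro i hi
    have t1 : G.dist (v_ i) y ≤ G.dist (v_ i) m + G.dist m y := hc.dist_triangle
    have t2 : G.dist w y ≤ G.dist w (v_ i) + G.dist (v_ i) y := hc.dist_triangle
    have h3 := f3 i hi
    omega
  refine ⟨fun i => {z | G.dist z (v_ (i.1+1)) = G.dist z (v_ i.1) + 1}, ?_, ?_, ?_, ?_, ?_⟩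
  · -- injectivity
    have key : ∀ i j : Fin n, i.1 < j.1 →
        ({z | G.dist z (v_ (i.1+1)) = G.dist z (v_ i.1) + 1} : Set V) ≠
        {z | G.dist z (v_ (j.1+1)) = G.dist z (v_ j.1) + 1} := by
      intro i j hij heq
      have hmem : v_ (i.1+1) ∈ {z | G.dist z (v_ (j.1+1)) = G.dist z (v_ j.1) + 1} := by
        show G.dist (v_ (i.1+1)) (v_ (j.1+1)) = G.dist (v_ (i.1+1)) (v_ j.1) + 1
        have e1 := f7 (i.1+1) (j.1+1) (by omega) (by exact j.isLt)
        have e2 := f7 (i.1+1) j.1 (by omega) (by omega)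
        omega
      rw [← heq] at hmem
      have : G.dist (v_ (i.1+1)) (v_ (i.1+1)) = G.dist (v_ (i.1+1)) (v_ i.1) + 1 := hmem
      have e0 : G.dist (v_ (i.1+1)) (v_ (i.1+1)) = 0 := SimpleGraph.dist_self
      have e1 : G.dist (v_ i.1) (v_ (i.1+1)) = 1 := f5 i.1 i.isLt
      have e2 : G.dist (v_ (i.1+1)) (v_ i.1) = G.dist (v_ i.1) (v_ (i.1+1)) :=
        SimpleGraph.dist_comm
      omega
    intro i j hij
    rcases lt_trichotomy i.1 j.1 with h | h | h
    · exact absurd hij (key i j h)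
    · exact Fin.ext h
    · exact absurd hij.symm (key j i h)
  · -- halfspaces
    intro i
    exact W_halfspace hmed (f5 i.1 i.isLt)
  · -- w ∈ H i
    intro i
    show G.dist w (v_ (i.1+1)) = G.dist w (v_ i.1) + 1
    have h1 := (f3 i.1 (by omega)).1
    have h2 := (f3 (i.1+1) (by exact i.isLt)).1
    omega
  · -- x ∉ H i
    intro i hmem
    have h1 := gx i.1 (by omega)
    have h2 := gx (i.1+1) (by exact i.isLt)
    have h3 : G.dist x (v_ (i.1+1)) = G.dist x (v_ i.1) + 1 := hmem
    have c1 : G.dist x (v_ (i.1+1)) = G.dist (v_ (i.1+1)) x := SimpleGraph.dist_comm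
    have c2 : G.dist x (v_ i.1) = G.dist (v_ i.1) x := SimpleGraph.dist_comm
    omega
  · -- y ∉ H i
    intro i hmem
    have h1 := gy i.1 (by omega)
    have h2 := gy (i.1+1) (by exact i.isLt)
    have h3 : G.dist y (v_ (i.1+1)) = G.dist y (v_ i.1) + 1 := hmem
    have c1 : G.dist y (v_ (i.1+1)) = G.dist (v_ (i.1+1)) y := SimpleGraph.dist_comm
    have c2 : G.dist y (v_ i.1) = G.dist (v_ i.1) y := SimpleGraph.dist_comm
    omega

variable {n : ℕ}

def mG (r : Fin n → Fin n → Prop) [DecidableRel r] : ℕ → Fin n → ℕ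
  | 0, _ => 0
  | t+1, i => (Finset.univ.filter (fun j => r j i)).sup (fun j => mG r t j + 1)

lemma mG_stab (r : Fin n → Fin n → Prop) [DecidableRel r]
    (htrans : ∀ {a b c}, r a b → r b c → r a c) (hirr : ∀ a, ¬ r a a) :
    ∀ t (i : Fin n), (Finset.univ.filter (fun j => r j i)).card ≤ t →
      mG r (t+1) i = mG r t i := by
  intro t
  induction t with
  | zero =>
    intro i hcard
    have he : Finset.univ.filter (fun j => r j i) = ∅ :=
      Finset.card_eq_zero.mp (Nat.le_zero.mp hcard)
    show (Finset.univ.filter (fun j => r j i)).sup (fun j => mG r 0 j + 1) = 0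
    rw [he, Finset.sup_empty]
    rfl
  | succ t ih =>
    intro i hcard
    show (Finset.univ.filter (fun j => r j i)).sup (fun j => mG r (t+1) j + 1)
       = (Finset.univ.filter (fun j => r j i)).sup (fun j => mG r t j + 1)
    apply Finset.sup_congr rfl
    intro j hj
    rw [Finset.mem_filter] at hj
    have hsub : Finset.univ.filter (fun k => r k j) ⊆ Finset.univ.filter (fun k => r k i) := by
      intro kk hk
      rw [Finset.mem_filter] at hk ⊢
      exact ⟨hk.1, htrans hk.2 hj.2⟩
    have hjnot : j ∉ Finset.univ.filter (fun k => r k j) := by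
      rw [Finset.mem_filter]
      exact fun hh => hirr j hh.2
    have hlt : (Finset.univ.filter (fun k => r k j)).card <
        (Finset.univ.filter (fun k => r k i)).card := by
      apply Finset.card_lt_card
      refine ⟨hsub, fun hsup => hjnot (hsup (Finset.mem_filter.mpr ⟨Finset.mem_univ _, hj.2⟩))⟩
    rw [ih j (by omega)]

lemma mG_height_lt (r : Fin n → Fin n → Prop) [DecidableRel r]
    (htrans : ∀ {a b c}, r a b → r b c → r a c) (hirr : ∀ a, ¬ r a a)
    {i j : Fin n} (hr : r j i) : mG r n j < mG r n i := by
  have hcard : (Finset.univ.filter (fun k => r k i)).card ≤ n := by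
    have h1 := Finset.card_le_univ (Finset.univ.filter (fun k => r k i))
    simpa using h1
  have hstab := mG_stab r htrans hirr n i hcard
  have hle : mG r n j + 1 ≤ mG r (n+1) i := by
    show _ ≤ (Finset.univ.filter (fun k => r k i)).sup (fun k => mG r n k + 1)
    exact Finset.le_sup (f := fun k => mG r n k + 1)
      (Finset.mem_filter.mpr ⟨Finset.mem_univ _, hr⟩)
  omega

lemma mG_chain (r : Fin n → Fin n → Prop) [DecidableRel r]
    (htrans : ∀ {a b c}, r a b → r b c → r a c) :
    ∀ t (i : Fin n), ∃ c : ℕ → Fin n, c (mG r t i) = i ∧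
      ∀ s s', s < s' → s' ≤ mG r t i → r (c s) (c s') := by
  intro t
  induction t with
  | zero =>
    intro i
    refine ⟨fun _ => i, rfl, fun s s' h1 h2 => absurd h2 ?_⟩
    rw [show mG r 0 i = 0 from rfl]
    omega
  | succ t ih =>
    intro i
    by_cases h0 : mG r (t+1) i = 0
    · refine ⟨fun _ => i, rfl, fun s s' h1 h2 => ?_⟩
      rw [h0] at h2
      omega
    · have hne : (Finset.univ.filter (fun j => r j i)).Nonempty := by
        by_contra hemp
        rw [Finset.not_nonempty_iff_eq_empty] at hemp
        apply h0
        show (Finset.univ.filter (fun j => r j i)).sup (fun j => mG r t j + 1) = 0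
        rw [hemp, Finset.sup_empty]
        rfl
      obtain ⟨j, hjmem, hjsup⟩ := Finset.exists_mem_eq_sup _ hne (fun j => mG r t j + 1)
      rw [Finset.mem_filter] at hjmem
      have hrji : r j i := hjmem.2
      obtain ⟨c, hclast, hchain⟩ := ih j
      have hLval : mG r (t+1) i = mG r t j + 1 := hjsup
      refine ⟨fun s => if s = mG r (t+1) i then i else c s, by simp, ?_⟩
      intro s s' h1 h2
      by_cases hs' : s' = mG r (t+1) i
      · have hsne : s ≠ mG r (t+1) i := by omega
        simp only [if_neg hsne, if_pos hs']
        rcases eq_or_lt_of_le (show s ≤ mG r t j by omega) with he | hl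
        · rw [he, hclast]
          exact hrji
        · refine htrans (hchain s (mG r t j) hl le_rfl) ?_
          rw [hclast]
          exact hrji
      · have hlt : s' < mG r (t+1) i := lt_of_le_of_ne h2 hs'
        have hsne : s ≠ mG r (t+1) i := by omega
        simp only [if_neg hsne, if_neg hs']
        exact hchain s s' h1 (by omega)

lemma mirsky_bound {d D : ℕ} (r : Fin n → Fin n → Prop) [DecidableRel r]
    (htrans : ∀ {a b c}, r a b → r b c → r a c) (hirr : ∀ a, ¬ r a a)
    (hchain : ∀ c : Fin (D+1) → Fin n, (∀ s t : Fin (D+1), s < t → r (c s) (c t)) → False)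
    (hanti : ∀ s : Finset (Fin n), (∀ i ∈ s, ∀ j ∈ s, ¬ r i j) → s.card ≤ d) :
    n ≤ D * d := by
  classical
  have hlt : ∀ i : Fin n, mG r n i < D := by
    intro i
    by_contra hge
    push_neg at hge
    obtain ⟨c, -, hch⟩ := mG_chain r htrans n i
    exact hchain (fun s => c s.1)
      (fun s t hst => hch s.1 t.1 hst (le_trans (Nat.lt_succ_iff.mp t.isLt) hge))
  have hcount : (Finset.univ : Finset (Fin n)).card =
      ∑ t ∈ Finset.range D, (Finset.univ.filter (fun i => mG r n i = t)).card :=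
    Finset.card_eq_sum_card_fiberwise (fun i _ => Finset.mem_range.mpr (hlt i))
  have hfib : ∀ t ∈ Finset.range D,
      (Finset.univ.filter (fun i => mG r n i = t)).card ≤ d := by
    intro t _
    apply hanti
    intro i hi j hj hr
    rw [Finset.mem_filter] at hi hj
    have := mG_height_lt r htrans hirr hr
    omega
  have hsum : ∑ t ∈ Finset.range D, (Finset.univ.filter (fun i => mG r n i = t)).card
      ≤ D * d := by
    calc ∑ t ∈ Finset.range D, (Finset.univ.filter (fun i => mG r n i = t)).card
        ≤ ∑ _t ∈ Finset.range D, d := Finset.sum_le_sum hfib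
      _ = D * d := by rw [Finset.sum_const, Finset.card_range, smul_eq_mul]
  have huniv : (Finset.univ : Finset (Fin n)).card = n := by simp
  omega

lemma family_card_le {d D n : ℕ} (hdim : DimLE G d)
    (hDmax : ¬ GridExists G (D+1)) (x y w : V) (H : Fin n → Set V)
    (hinj : Function.Injective H) (hhalf : ∀ i, IsHalfspace G (H i))
    (hw : ∀ i, w ∈ H i) (hx : ∀ i, x ∉ H i) (hy : ∀ i, y ∉ H i)
    (hper : ∀ i, ¬ PeripheralD G x y D (H i)) : n ≤ D * d := by
  classical
  have hchain : ∀ c : Fin (D+1) → Fin n,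
      (∀ s t : Fin (D+1), s < t → H (c s) ⊂ H (c t)) → False := by
    intro c hc
    have h0 : ¬ (∀ n' : ℕ, ∀ k : Fin n' → Set V, (∀ i, Separates G x y (k i)) →
        (∀ i j, i < j → k i ⊂ k j) → (∀ i, Crosses (k i) (H (c 0))) → n' ≤ D) := by
      intro hP
      exact hper (c 0) ⟨hhalf (c 0), hx (c 0), hy (c 0), hP⟩
    push_neg at h0
    obtain ⟨n', k, hk1, hk2, hk3, hn'⟩ := h0
    apply hDmax
    refine ⟨fun j => H (c j),
      fun j => k ⟨j.1, lt_of_le_of_lt (Nat.lt_succ_iff.mp j.isLt) hn'⟩,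
      fun j => hhalf _, fun j => (hk1 _).1, ?_, ?_, ?_⟩
    · intro i j hij
      exact hc i j hij
    · intro i j hij
      exact hk2 _ _ (Fin.mk_lt_mk.mpr hij)
    · intro i j
      have hsub : H (c 0) ⊆ H (c i) := by
        rcases eq_or_lt_of_le (Fin.zero_le i) with he | hl
        · rw [← he]
        · exact (hc 0 i hl).subset
      obtain ⟨q1, q2, q3, q4⟩ := hk3 ⟨j.1, lt_of_le_of_lt (Nat.lt_succ_iff.mp j.isLt) hn'⟩
      refine ⟨?_, ?_, ⟨y, ?_, ?_⟩, ⟨x, ?_, ?_⟩⟩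
      · obtain ⟨z, hz1, hz2⟩ := q1
        exact ⟨z, hsub hz2, hz1⟩
      · obtain ⟨z, hz1, hz2⟩ := q3
        exact ⟨z, hsub hz2, hz1⟩
      · exact hy (c i)
      · exact (hk1 _).2.2
      · exact hx (c i)
      · exact (hk1 _).2.1
  have hanti : ∀ s : Finset (Fin n), (∀ i ∈ s, ∀ j ∈ s, ¬ H i ⊂ H j) → s.card ≤ d := by
    intro s hs
    have himg := hdim (s.image H) ?_ ?_
    · rwa [Finset.card_image_of_injective s hinj] at himg
    · intro A hA
      obtain ⟨i, hi, rfl⟩ := Finset.mem_image.mp hA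
      exact hhalf i
    · intro A hA B hB hAB
      rw [Finset.coe_image] at hA hB
      obtain ⟨i, hi, rfl⟩ := hA
      obtain ⟨j, hj, rfl⟩ := hB
      rw [Finset.mem_coe] at hi hj
      have n1 : ¬ H i ⊂ H j := hs i hi j hj
      have n2 : ¬ H j ⊂ H i := hs j hj i hi
      refine ⟨⟨w, hw i, hw j⟩, ?_, ?_, ⟨x, hx i, hx j⟩⟩
      · by_contra hemp
        rw [Set.not_nonempty_iff_eq_empty] at hemp
        have hsub : H i ⊆ H j := by
          intro z hz
          by_contra hzj
          have : z ∈ H i ∩ (H j)ᶜ := ⟨hz, hzj⟩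
          rw [hemp] at this
          exact this
        exact n1 (Set.ssubset_iff_subset_ne.mpr ⟨hsub, hAB⟩)
      · by_contra hemp
        rw [Set.not_nonempty_iff_eq_empty] at hemp
        have hsub : H j ⊆ H i := by
          intro z hz
          by_contra hzi
          have : z ∈ (H i)ᶜ ∩ H j := ⟨hzi, hz⟩
          rw [hemp] at this
          exact this
        exact n2 (Set.ssubset_iff_subset_ne.mpr ⟨hsub, hAB.symm⟩)
  haveI : DecidableRel (fun i j : Fin n => H i ⊂ H j) := fun _ _ => Classical.dec _
  exact mirsky_bound (fun i j => H i ⊂ H j)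
    (fun hab hbc => hab.trans hbc) (fun a h => ssubset_irrefl _ h) hchain hanti

end Stmt10Aux

/-- with `D` the maximal grid size, `I(x,y) ⊆ I_D(x,y) ⊆ N_{D*d}(I(x,y))`. -/
theorem stmt10 (G : SimpleGraph V) (d δ D : ℕ) (hmed : MedianGraph G) (hdim : DimLE G d)
    (hhyp : Hyperbolic G δ) (hDex : GridExists G D) (hDmax : ¬ GridExists G (D + 1))
    (x y : V) :
    interval G x y ⊆ cylinderD G D x y ∧
      cylinderD G D x y ⊆ {w : V | ∃ a ∈ interval G x y, G.dist w a ≤ D * d} := by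
  constructor
  · intro z hz
    show z ∈ ⋂ h ∈ {h : Set V | PeripheralD G x y D h}, hᶜ
    refine Set.mem_iInter₂.mpr ?_
    intro h hp
    exact hp.1.2.2.2 x hp.2.1 y hp.2.2.1 hz
  · intro w hwmem
    have hwmem' : w ∈ ⋂ h ∈ {h : Set V | PeripheralD G x y D h}, hᶜ := hwmem
    obtain ⟨m, ⟨⟨hm1, hm2⟩, hm3⟩, -⟩ := hmed.2 x y w
    refine ⟨m, hm1, ?_⟩
    have hmx : m ∈ interval G w x := Stmt10Aux.interval_comm hm3
    have hmy : m ∈ interval G w y := Stmt10Aux.interval_comm hm2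
    obtain ⟨H, hinj, hhalf, hwH, hxH, hyH⟩ :=
      Stmt10Aux.geodesic_family hmed x y w m hmx hmy
    have hper : ∀ i, ¬ PeripheralD G x y D (H i) := by
      intro i hp
      exact Set.mem_iInter₂.mp hwmem' (H i) hp (hwH i)
    exact Stmt10Aux.family_card_le hdim hDmax x y w H hinj hhalf hwH hxH hyH hper
end

section
/- Let X be a δ-hyperbolic CAT(0) cube complex. Then X contains no grid of size 2δ+1, i.e., X contains no pair of nested pencils h₁ < … < h_{2δ+1} and k₁ < … < k_{2δ+1} of halfspaces with every ĥ_i crossing every k̂_j. -/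
/-! Combinatorial model of a CAT(0) cube complex: the vertex set of its 1-skeleton,
a median graph, with halfspaces, hyperplane crossing, dimension, hyperbolicity. -/

variable {V : Type*}

/-- An edge (pair at distance 1) cannot cross two "different" walls. -/
lemma edge_cross_unique (G : SimpleGraph V) (hmed : MedianGraph G)
    {u v : Set V} (hu : IsHalfspace G u) (hv : IsHalfspace G v)
    {e₁ e₂ z : V} (hd : G.dist e₁ e₂ = 1)
    (h1u : e₁ ∉ u) (h2u : e₂ ∈ u) (h1v : e₁ ∉ v) (h2v : e₂ ∈ v)
    (hzv : z ∈ v) (hzu : z ∉ u) : False := by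
  obtain ⟨m, ⟨hm12, hm2z⟩, hm1z⟩ := (hmed.2 e₁ e₂ z).exists
  have hmu : m ∈ uᶜ := hu.2.2.2 e₁ h1u z hzu hm1z
  have hme : G.dist e₁ m + G.dist m e₂ = G.dist e₁ e₂ := hm12
  have hm1 : m = e₁ := by
    have : G.dist e₁ m = 0 ∨ G.dist m e₂ = 0 := by omega
    rcases this with h0 | h0
    · exact (hmed.1.dist_eq_zero_iff.mp ((SimpleGraph.dist_comm .. ).trans h0)).symm ▸ rfl
    · exact absurd ((hmed.1.dist_eq_zero_iff.mp h0) ▸ hmu) (by simpa using h2u)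
  have : m ∈ v := hv.2.2.1 e₂ h2v z hzv hm2z
  exact h1v (hm1 ▸ this)

/-- A strictly "distinct" family of halfspaces separating x from y bounds the distance below. -/
lemma chain_le_dist (G : SimpleGraph V) (hmed : MedianGraph G) {x y : V} {n : ℕ}
    (w : Fin n → Set V) (hw : ∀ i, IsHalfspace G (w i)) (hinj : Function.Injective w)
    (hx : ∀ i, x ∉ w i) (hy : ∀ i, y ∈ w i) : n ≤ G.dist x y := by
  classical
  rcases Nat.eq_zero_or_pos n with h0 | hn
  · omega
  have hconn := hmed.1
  obtain ⟨p, hp⟩ := hconn.exists_walk_length_eq_dist x y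
  set L := p.length with hLdef
  set γ : ℕ → V := p.getVert with hγdef
  have hγ0 : γ 0 = x := p.getVert_zero
  have hγL : γ L = y := p.getVert_length
  have hLpos : 0 < L := by
    rcases Nat.eq_zero_or_pos L with h | h
    · exact absurd (hy ⟨0, hn⟩) (by
        have hxy : x = y := by rw [← hγ0, ← hγL, h]
        exact hxy ▸ hx ⟨0, hn⟩)
    · exact h
  have hsub : ∀ b, b ≤ L → ∀ a, a ≤ b → G.dist (γ a) (γ b) ≤ b - a := by
    intro b
    induction b with
    | zero =>
      intro _ a ha
      have : a = 0 := by omega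
      subst this; simp [SimpleGraph.dist_self]
    | succ b ih =>
      intro hbL a ha
      rcases Nat.lt_or_ge a (b + 1) with hlt | hge
      · have h1 : G.dist (γ b) (γ (b + 1)) = 1 :=
          SimpleGraph.dist_eq_one_iff_adj.mpr (p.adj_getVert_succ (by omega))
        have h2 := ih (by omega) a (by omega)
        have h3 := hconn.dist_triangle (u := γ a) (v := γ b) (w := γ (b + 1))
        omega
      · have haeq : a = b + 1 := by omega
        subst haeq; simp [SimpleGraph.dist_self]
  have hint : ∀ a b, a ≤ b → b ≤ L → γ b ∈ interval G (γ a) y := by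
    intro a b hab hbL
    have t1 := hsub b hbL a hab
    have t2 : G.dist x (γ a) ≤ a := by
      have := hsub a (by omega) 0 (by omega)
      rwa [hγ0] at this
    have t3 : G.dist (γ b) y ≤ L - b := by
      have := hsub L le_rfl b hbL
      rwa [hγL] at this
    have t4 := hconn.dist_triangle (u := x) (v := γ a) (w := y)
    have t5 := hconn.dist_triangle (u := γ a) (v := γ b) (w := y)
    have hL : G.dist x y = L := hp.symm
    show G.dist (γ a) (γ b) + G.dist (γ b) y = G.dist (γ a) y
    omega
  -- crossing indices
  have hex : ∀ i : Fin n, ∃ t, t < L ∧ γ t ∉ w i ∧ γ (t + 1) ∈ w i := by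
    intro i
    have hexists : ∃ t, γ t ∈ w i := ⟨L, hγL ▸ hy i⟩
    set T := Nat.find hexists with hT
    have hTmem : γ T ∈ w i := Nat.find_spec hexists
    have hTle : T ≤ L := Nat.find_le (hγL ▸ hy i)
    have hTpos : 0 < T := by
      rcases Nat.eq_zero_or_pos T with h | h
      · exact absurd (h ▸ hTmem) (hγ0 ▸ hx i)
      · exact h
    refine ⟨T - 1, by omega, Nat.find_min hexists (by omega), ?_⟩
    have : T - 1 + 1 = T := by omega
    rw [this]; exact hTmem
  choose c hcL hc1 hc2 using hex
  have hc_inj : Function.Injective c := by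
    intro i j hij
    by_contra hne
    have hwne : w i ≠ w j := fun h => hne (hinj h)
    obtain ⟨z, hz⟩ : ∃ z, (z ∈ w i ∧ z ∉ w j) ∨ (z ∈ w j ∧ z ∉ w i) := by
      by_contra hc
      push_neg at hc
      exact hwne (Set.ext fun z => ⟨fun h => (hc z).1 h, fun h => (hc z).2 h⟩)
    have hd : G.dist (γ (c i)) (γ (c i + 1)) = 1 :=
      SimpleGraph.dist_eq_one_iff_adj.mpr (p.adj_getVert_succ (hcL i))
    have h1j : γ (c i) ∉ w j := hij ▸ hc1 j
    have h2j : γ (c i + 1) ∈ w j := by rw [hij]; exact hc2 j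
    rcases hz with ⟨hzi, hzj⟩ | ⟨hzj, hzi⟩
    · exact edge_cross_unique G hmed (hw j) (hw i) hd h1j h2j (hc1 i) (hc2 i) hzi hzj
    · exact edge_cross_unique G hmed (hw i) (hw j) hd (hc1 i) (hc2 i) h1j h2j hzj hzi
  have : n ≤ L := by
    have := Fintype.card_le_of_injective (fun i : Fin n => (⟨c i, hcL i⟩ : Fin L))
      (fun i j h => hc_inj (by simpa using congrArg Fin.val h))
    simpa using this
  omega


lemma grid_le_delta (G : SimpleGraph V) (δ : ℕ) (hmed : MedianGraph G)
    (hhyp : Hyperbolic G δ) {m : ℕ} (hg : GridExists G m) : m ≤ δ := by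
  rcases Nat.eq_zero_or_pos m with h0 | hm
  · omega
  obtain ⟨h, k, hh, hk, hhn, hkn, hcr⟩ := hg
  have hconn := hmed.1
  set i0 : Fin m := ⟨0, hm⟩ with hi0
  set il : Fin m := ⟨m - 1, by omega⟩ with hil
  have hmono : ∀ f : Fin m → Set V, (∀ i j : Fin m, i < j → f i ⊂ f j) →
      ∀ i j : Fin m, i ≤ j → f i ⊆ f j := by
    intro f hf i j hij
    rcases eq_or_lt_of_le hij with heq | hlt
    · rw [heq]
    · exact (hf i j hlt).1
  have hinjf : ∀ f : Fin m → Set V, (∀ i j : Fin m, i < j → f i ⊂ f j) →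
      Function.Injective f := by
    intro f hf i j hij
    by_contra hne
    rcases lt_trichotomy i j with hlt | heq | hlt
    · exact (hf i j hlt).ne hij
    · exact hne heq
    · exact (hf j i hlt).ne hij.symm
  have h0le : ∀ i : Fin m, i0 ≤ i := fun i => by simp [hi0, Fin.le_def]
  have hlel : ∀ i : Fin m, i ≤ il := fun i => by
    simp only [hil, Fin.le_def]; omega
  -- corners
  obtain ⟨p₀, hp₀h, hp₀k⟩ := (hcr i0 i0).1
  obtain ⟨q₀, hq₀h, hq₀k⟩ := (hcr i0 il).2.1
  obtain ⟨r₀, hr₀h, hr₀k⟩ := (hcr il i0).2.2.1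
  obtain ⟨s, hsh, hsk⟩ := (hcr il il).2.2.2
  -- medians
  obtain ⟨q, ⟨hq1, hq2⟩, hq3⟩ := (hmed.2 p₀ q₀ s).exists
  obtain ⟨r, ⟨hr1, hr2⟩, hr3⟩ := (hmed.2 p₀ r₀ s).exists
  obtain ⟨p, ⟨hp1, hp2⟩, hp3⟩ := (hmed.2 p₀ q r).exists
  -- memberships
  have hq_h0 : q ∈ h i0 := (hh i0).2.2.1 p₀ hp₀h q₀ hq₀h hq1
  have hq_kl : q ∈ (k il)ᶜ := (hk il).2.2.2 q₀ hq₀k s hsk hq2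
  have hr_hl : r ∈ (h il)ᶜ := (hh il).2.2.2 r₀ hr₀h s hsh hr2
  have hr_k0 : r ∈ k i0 := (hk i0).2.2.1 p₀ hp₀k r₀ hr₀k hr1
  have hp_h0 : p ∈ h i0 := (hh i0).2.2.1 p₀ hp₀h q hq_h0 hp1
  have hp_k0 : p ∈ k i0 := (hk i0).2.2.1 p₀ hp₀k r hr_k0 hp3
  -- chain lower bounds
  have d1 : m ≤ G.dist r p := by
    have := chain_le_dist G hmed h hh (hinjf h hhn)
      (fun i => fun hri => hr_hl (hmono h hhn i il (hlel i) hri))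
      (fun i => hmono h hhn i0 i (h0le i) hp_h0)
    simpa using this
  have d2 : m ≤ G.dist q p := by
    have := chain_le_dist G hmed k hk (hinjf k hkn)
      (fun i => fun hqi => hq_kl (hmono k hkn i il (hlel i) hqi))
      (fun i => hmono k hkn i0 i (h0le i) hp_k0)
    simpa using this
  -- interval equations
  have e1 : G.dist p₀ q + G.dist q s = G.dist p₀ s := hq3
  have e2 : G.dist p₀ p + G.dist p q = G.dist p₀ q := hp1
  have e3 : G.dist p₀ p + G.dist p r = G.dist p₀ r := hp3
  have e4 : G.dist q p + G.dist p r = G.dist q r := hp2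
  have e5 : G.dist p₀ r + G.dist r s = G.dist p₀ s := hr3
  have tri1 := hconn.dist_triangle (u := p) (v := q) (w := s)
  have tri2 := hconn.dist_triangle (u := p₀) (v := p) (w := s)
  have tri3 := hconn.dist_triangle (u := p) (v := r) (w := s)
  have eq_q : G.dist p q + G.dist q s = G.dist p s := by omega
  have eq_r : G.dist p r + G.dist r s = G.dist p s := by omega
  have H := hhyp p s q r
  have c1 : G.dist s r = G.dist r s := SimpleGraph.dist_comm ..
  have c2 : G.dist s q = G.dist q s := SimpleGraph.dist_comm ..
  have c3 : G.dist q p = G.dist p q := SimpleGraph.dist_comm ..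
  have c4 : G.dist r p = G.dist p r := SimpleGraph.dist_comm ..
  rcases le_total (G.dist p q + G.dist s r) (G.dist p r + G.dist s q) with hmax | hmax
  · rw [max_eq_right hmax] at H
    omega
  · rw [max_eq_left hmax] at H
    omega


lemma grid_zero (G : SimpleGraph V) : GridExists G 0 :=
  ⟨Fin.elim0, Fin.elim0, fun i => i.elim0, fun i => i.elim0,
    fun i => i.elim0, fun i => i.elim0, fun i => i.elim0⟩

/-- a δ-hyperbolic cube complex has a maximal grid size `D ≤ 2δ`;
in particular it has no grid of size `2δ + 1`. -/
theorem stmt11 (G : SimpleGraph V) (δ : ℕ) (hmed : MedianGraph G) (hhyp : Hyperbolic G δ) :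
    ∃ D : ℕ, D ≤ 2 * δ ∧ GridExists G D ∧ (∀ m, GridExists G m → m ≤ D) := by
  set S : Set ℕ := {m | GridExists G m} with hS
  have h0 : (0 : ℕ) ∈ S := grid_zero G
  have hb : ∀ m ∈ S, m ≤ δ := fun m hm => grid_le_delta G δ hmed hhyp hm
  have hbdd : BddAbove S := ⟨δ, fun m hm => hb m hm⟩
  have hmem : sSup S ∈ S := Nat.sSup_mem ⟨0, h0⟩ hbdd
  exact ⟨sSup S, le_trans (csSup_le ⟨0, h0⟩ hb) (by omega), hmem,
    fun m hm => le_csSup hbdd hm⟩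
end

section
/- Let X be a CAT(0) cube complex, x, y, z vertices, m = m(x,y,z) their median, ρ = d(x,m) (the Gromov product (y.z)_x), and D, d constants. If h is a halfspace with x, y ∈ h*, whose projection to I(x,y) has d_max(x, π_{I(x,y)}(h)) < ρ − D·d, then x, z ∈ h* as well, i.e., h is peripheral to the pair (x,z). -/
/-! Combinatorial model of a CAT(0) cube complex: the vertex set of its 1-skeleton,
a median graph, with halfspaces, hyperplane crossing, dimension, hyperbolicity. -/

variable {V : Type*}

/-- if `h` is a halfspace with `x, y ∈ h*` whose projection to `I(x,y)`
lies at distance `< ρ - D*d` from `x` (where `ρ = d(x, m(x,y,z))` is the Gromov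
product `(y.z)_x`), then also `z ∈ h*`, i.e. `h` is peripheral to `(x,z)`. -/
theorem stmt12 (G : SimpleGraph V) (D d : ℕ) (hmed : MedianGraph G) (x y z m : V)
    (hm : m ∈ interval G x y ∩ interval G y z ∩ interval G x z)
    (π : V → V) (hπ : IsGate G (interval G x y) π)
    (h : Set V) (hh : IsHalfspace G h) (hx : x ∈ hᶜ) (hy : y ∈ hᶜ)
    (hmax : ∀ a ∈ π '' h, G.dist x a + D * d < G.dist x m) :
    z ∈ hᶜ := by
  by_contra hz
  simp only [Set.mem_compl_iff, not_not] at hz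
  obtain ⟨hgz, hgate⟩ := hπ z
  have hxmem : x ∈ interval G x y := by
    simp [interval, SimpleGraph.dist_self]
  have hymem : y ∈ interval G x y := by
    simp [interval, SimpleGraph.dist_self]
  have h2 : π z ∈ interval G x z := by
    have := hgate x hxmem
    simp only [interval, Set.mem_setOf_eq]
    rw [G.dist_comm (u := x) (v := π z), G.dist_comm (u := π z) (v := z), G.dist_comm (u := x) (v := z)]
    omega
  have h3 : π z ∈ interval G y z := by
    have := hgate y hymem
    simp only [interval, Set.mem_setOf_eq]
    rw [G.dist_comm (u := y) (v := π z), G.dist_comm (u := π z) (v := z), G.dist_comm (u := y) (v := z)]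
    omega
  have hmeq : m = π z := (hmed.2 x y z).unique hm ⟨⟨hgz, h3⟩, h2⟩
  have := hmax m ⟨z, hz, hmeq.symm⟩
  omega
end

section
/- Let X be a CAT(0) cube complex with vertices x, y, halfspaces h with x,y ∈ h*, and suppose k₁ < … < k_{D+1} are halfspaces separating x from y whose hyperplanes all cross ĥ'. If h₁ < … < h_{D+1} is a pencil with I(x,y) ⊆ h₁ and h' := h_{D+1}, then the hyperplanes ĥ₁, …, ĥ_{D+1} all cross each of k̂₁, …, k̂_{D+1}, producing a grid of size D+1. -/
/-! Combinatorial model of a CAT(0) cube complex: the vertex set of its 1-skeleton,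
a median graph, with halfspaces, hyperplane crossing, dimension, hyperbolicity. -/

variable {V : Type*}

/-- given a nested pencil `h₁ ⊂ … ⊂ h_{D+1}` with `I(x,y) ⊆ h₁`, and a
nested pencil `k₁ ⊂ … ⊂ k_{D+1}` of halfspaces separating `x` from `y` whose
hyperplanes all cross `ĥ_{D+1}`, every `ĥ_i` crosses every `k̂_j`, giving a grid of
size `D + 1`. -/
theorem stmt14 (G : SimpleGraph V) (D : ℕ) (hmed : MedianGraph G) (x y : V)
    (hh : Fin (D + 1) → Set V) (hhalf : ∀ i, IsHalfspace G (hh i))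
    (hnest : ∀ i j, i < j → hh i ⊂ hh j) (hI : interval G x y ⊆ hh 0)
    (k : Fin (D + 1) → Set V) (hsep : ∀ j, Separates G x y (k j))
    (hknest : ∀ i j, i < j → k i ⊂ k j)
    (hcross : ∀ j, Crosses (k j) (hh (Fin.last D))) :
    ∀ i j, Crosses (hh i) (k j) := by
  intro i j
  have hxI : x ∈ interval G x y := by
    simp [interval]
  have hyI : y ∈ interval G x y := by
    simp [interval]
  have hsub : ∀ i : Fin (D + 1), hh i ⊆ hh (Fin.last D) := by
    intro i
    rcases lt_or_eq_of_le (Fin.le_last i) with hlt | heq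
    · exact (hnest i (Fin.last D) hlt).subset
    · rw [heq]
  have hxh : x ∈ hh i := by
    rcases eq_or_lt_of_le (Fin.zero_le i) with h0 | h0
    · rw [← h0]; exact hI hxI
    · exact (hnest 0 i h0).subset (hI hxI)
  have hyh : y ∈ hh i := by
    rcases eq_or_lt_of_le (Fin.zero_le i) with h0 | h0
    · rw [← h0]; exact hI hyI
    · exact (hnest 0 i h0).subset (hI hyI)
  obtain ⟨hk, hxk, hyk⟩ := hsep j
  obtain ⟨_, h2, h3, h4⟩ := hcross j
  have hcompl : (hh (Fin.last D))ᶜ ⊆ (hh i)ᶜ := Set.compl_subset_compl.mpr (hsub i)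
  refine ⟨⟨y, hyh, hyk⟩, ⟨x, hxh, hxk⟩, ?_, ?_⟩
  · obtain ⟨z, hz1, hz2⟩ := h2
    exact ⟨z, hcompl hz2, hz1⟩
  · obtain ⟨z, hz1, hz2⟩ := h4
    exact ⟨z, hcompl hz2, hz1⟩
end
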